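/- For every finite simple graph G, B_1(G) = Σ_{v ∈ V} C(deg v, 2) − k_3(G); that is, the first linear-strand Betti number equals the sum over all vertices of (deg v choose 2) minus the number of triangles of G. -/

import Mathlib

open Finset

/-- The `i`-th Betti number in the linear strand of the edge ideal of `G`:
`B_i(G) = Σ_{S ⊆ V, |S| = i+2} (#components of the complement of G[S] − 1)`. -/
noncomputable def linStrand {V : Type*} [Fintype V] [DecidableEq V]
    (G : SimpleGraph V) (i : ℕ) : ℕ :=
  ∑ S ∈ (Finset.univ : Finset V).powersetCard (i + 2),
    (Nat.card ((G.induce (S : Set V))ᶜ.ConnectedComponent) - 1)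


/-- Adjacency table for a graph on three vertices with edge indicators `p q r`. -/
private def eFun (p q r : Bool) : Fin 3 → Fin 3 → Bool
  | 0, 1 => p | 1, 0 => p
  | 0, 2 => q | 2, 0 => q
  | 1, 2 => r | 2, 1 => r
  | _, _ => false

private lemma eFun_symm : ∀ p q r i j, eFun p q r i j = eFun p q r j i := by decide
private lemma eFun_irrefl : ∀ p q r i, eFun p q r i i = false := by decide

/-- The graph on `Fin 3` with edges `0-1`, `0-2`, `1-2` present according to `p q r`. -/
private def threeGraph (p q r : Bool) : SimpleGraph (Fin 3) where
  Adj i j := eFun p q r i j = true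
  symm := ⟨fun i j h => (eFun_symm p q r j i).trans h⟩
  loopless := ⟨fun i h => by
    simp only [eFun_irrefl] at h; exact Bool.false_ne_true h⟩

private instance (p q r : Bool) : DecidableRel (threeGraph p q r).Adj :=
  fun _ _ => decEq _ _

private def val3 (p q r : Bool) : ℕ :=
  if p && q && r then 2 else if p && q || p && r || q && r then 1 else 0

private lemma card_comp_threeGraph (p q r : Bool) :
    Nat.card ((threeGraph p q r)ᶜ.ConnectedComponent) - 1 = val3 p q r := by
  rw [Nat.card_eq_fintype_card]
  cases p <;> cases q <;> cases r <;> decide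

private lemma val3_eq (p q r : Bool) :
    (val3 p q r : ℤ) = ((if p && q then 1 else 0) + (if p && r then 1 else 0)
      + (if q && r then 1 else 0)) - (if p && q && r then 1 else 0) := by
  cases p <;> cases q <;> cases r <;> decide

/-- A graph isomorphism induces an isomorphism of complements. -/
private def isoCompl {α β : Type*} {G : SimpleGraph α} {H : SimpleGraph β}
    (φ : G ≃g H) : Gᶜ ≃g Hᶜ where
  toEquiv := φ.toEquiv
  map_rel_iff' := by
    intro x y
    simp [SimpleGraph.compl_adj, φ.map_adj_iff]

private lemma key {V : Type*} [DecidableEq V] (G : SimpleGraph V) [DecidableRel G.Adj]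
    (a b c : V) (hab : a ≠ b) (hac : a ≠ c) (hbc : b ≠ c) :
    Nonempty (G.induce (({a, b, c} : Finset V) : Set V) ≃g
      threeGraph (decide (G.Adj a b)) (decide (G.Adj a c)) (decide (G.Adj b c))) := by
  have ha : a ∈ (({a, b, c} : Finset V) : Set V) := by simp
  have hb : b ∈ (({a, b, c} : Finset V) : Set V) := by simp
  have hc : c ∈ (({a, b, c} : Finset V) : Set V) := by simp
  refine ⟨⟨⟨fun x => if x.1 = a then 0 else if x.1 = b then 1 else 2,
    fun i => if i = 0 then ⟨a, ha⟩ else if i = 1 then ⟨b, hb⟩ else ⟨c, hc⟩, ?_, ?_⟩, ?_⟩⟩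
  · rintro ⟨x, hx⟩
    simp only [Finset.coe_insert, Set.mem_insert_iff, Finset.coe_singleton,
      Set.mem_singleton_iff] at hx
    rcases hx with rfl | rfl | rfl
    · simp
    · simp [hab.symm]
    · simp [hac.symm, hbc.symm]
  · intro i
    fin_cases i
    · simp
    · simp [hab.symm]
    · simp [hac.symm, hbc.symm]
  · rintro ⟨x, hx⟩ ⟨y, hy⟩
    have h1 : G.Adj b a ↔ G.Adj a b := G.adj_comm b a
    have h2 : G.Adj c a ↔ G.Adj a c := G.adj_comm c a
    have h3 : G.Adj c b ↔ G.Adj b c := G.adj_comm c b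
    simp only [Finset.coe_insert, Set.mem_insert_iff, Finset.coe_singleton,
      Set.mem_singleton_iff] at hx hy
    rcases hx with rfl | rfl | rfl <;> rcases hy with rfl | rfl | rfl <;>
      simp [threeGraph, eFun, SimpleGraph.induce, SimpleGraph.comap_adj,
        Function.Embedding.subtype, Function.Embedding.coeFn_mk, hab, hac, hbc, hab.symm, hac.symm, hbc.symm, h1, h2, h3] <;>
        (change _ ↔ G.Adj x y; tauto)

private lemma key2 {V : Type*} [Fintype V] [DecidableEq V] (G : SimpleGraph V)
    [DecidableRel G.Adj] (S : Finset V) (hS : S.card = 3) :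
    ((Nat.card ((G.induce (S : Set V))ᶜ.ConnectedComponent) - 1 : ℕ) : ℤ)
    = ((S.filter fun v => S.erase v ⊆ G.neighborFinset v).card : ℤ)
      - (if G.IsNClique 3 S then 1 else 0) := by
  obtain ⟨a, b, c, hab, hac, hbc, rfl⟩ := Finset.card_eq_three.mp hS
  obtain ⟨φ⟩ := key G a b c hab hac hbc
  set p := decide (G.Adj a b) with hp
  set q := decide (G.Adj a c) with hq
  set r := decide (G.Adj b c) with hr
  have hcard : Nat.card ((G.induce (({a,b,c} : Finset V) : Set V))ᶜ.ConnectedComponent)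
      = Nat.card ((threeGraph p q r)ᶜ.ConnectedComponent) :=
    Nat.card_congr (SimpleGraph.Iso.connectedComponentEquiv (isoCompl φ))
  rw [hcard, card_comp_threeGraph, val3_eq]
  have hpq : (p && q) = true ↔ G.Adj a b ∧ G.Adj a c := by
    simp [hp, hq]
  have hpr : (p && r) = true ↔ G.Adj a b ∧ G.Adj b c := by
    simp [hp, hr]
  have hqr : (q && r) = true ↔ G.Adj a c ∧ G.Adj b c := by
    simp [hq, hr]
  have hpqr : (p && q && r) = true ↔ G.IsNClique 3 ({a,b,c} : Finset V) := by
    rw [SimpleGraph.is3Clique_triple_iff]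
    simp [hp, hq, hr, and_assoc]
  have hea : ({a,b,c} : Finset V).erase a = {b, c} := by
    rw [Finset.erase_insert (by simp [hab, hac])]
  have heb : ({a,b,c} : Finset V).erase b = {a, c} := by
    rw [Finset.erase_insert_of_ne hab, Finset.erase_insert (by simp [hbc])]
  have hec : ({a,b,c} : Finset V).erase c = {a, b} := by
    ext x
    simp only [Finset.mem_erase, Finset.mem_insert, Finset.mem_singleton]
    constructor
    · rintro ⟨hx, rfl | rfl | rfl⟩ <;> tauto
    · rintro (rfl | rfl) <;> simp [hac, hbc]
  have hfil : (({a,b,c} : Finset V).filter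
      fun v => ({a,b,c} : Finset V).erase v ⊆ G.neighborFinset v).card
      = (if p && q then 1 else 0) + (if p && r then 1 else 0) + (if q && r then 1 else 0) := by
    rw [Finset.card_filter]
    rw [Finset.sum_insert (by simp [hab, hac]), Finset.sum_insert (by simp [hbc]),
      Finset.sum_singleton]
    have e1 : ({a,b,c} : Finset V).erase a ⊆ G.neighborFinset a ↔ (p && q) = true := by
      rw [hea, Finset.insert_subset_iff, Finset.singleton_subset_iff,
        SimpleGraph.mem_neighborFinset, SimpleGraph.mem_neighborFinset, hpq]
    have e2 : ({a,b,c} : Finset V).erase b ⊆ G.neighborFinset b ↔ (p && r) = true := by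
      rw [heb, Finset.insert_subset_iff, Finset.singleton_subset_iff,
        SimpleGraph.mem_neighborFinset, SimpleGraph.mem_neighborFinset, G.adj_comm b a, hpr]
    have e3 : ({a,b,c} : Finset V).erase c ⊆ G.neighborFinset c ↔ (q && r) = true := by
      rw [hec, Finset.insert_subset_iff, Finset.singleton_subset_iff,
        SimpleGraph.mem_neighborFinset, SimpleGraph.mem_neighborFinset, G.adj_comm c a,
        G.adj_comm c b, hqr]
    simp only [e1, e2, e3]
    ring
  rw [hfil]
  rw [if_congr hpqr.symm rfl rfl]
  push_cast
  ring


private lemma sumCenters {V : Type*} [Fintype V] [DecidableEq V] (G : SimpleGraph V)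
    [DecidableRel G.Adj] :
    ∑ S ∈ (Finset.univ : Finset V).powersetCard 3,
      (S.filter fun v => S.erase v ⊆ G.neighborFinset v).card
    = ∑ v : V, (G.degree v).choose 2 := by
  have step1 : ∀ S : Finset V,
      (S.filter fun v => S.erase v ⊆ G.neighborFinset v).card
      = ∑ v : V, if v ∈ S ∧ S.erase v ⊆ G.neighborFinset v then 1 else 0 := by
    intro S
    rw [Finset.card_filter]
    simp only [ite_and]
    rw [Finset.sum_ite_mem, Finset.univ_inter]
  simp only [step1]
  rw [Finset.sum_comm]
  refine Finset.sum_congr rfl fun v _ => ?_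
  rw [← Finset.card_filter]
  have hb : ((Finset.univ : Finset V).powersetCard 3 |>.filter
        fun S => v ∈ S ∧ S.erase v ⊆ G.neighborFinset v).card
      = ((G.neighborFinset v).powersetCard 2).card := by
    refine Finset.card_nbij' (fun S => S.erase v) (fun T => insert v T) ?_ ?_ ?_ ?_
    · intro S hS
      simp only [Finset.mem_coe, Finset.mem_filter, Finset.mem_powersetCard_univ] at hS
      obtain ⟨h3, hv, hsub⟩ := hS
      rw [Finset.mem_coe, Finset.mem_powersetCard]
      exact ⟨hsub, by rw [Finset.card_erase_of_mem hv, h3]⟩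
    · intro T hT
      rw [Finset.mem_coe, Finset.mem_powersetCard] at hT
      obtain ⟨hsub, h2⟩ := hT
      have hvT : v ∉ T := fun h => G.notMem_neighborFinset_self v (hsub h)
      simp only [Finset.mem_coe, Finset.mem_filter, Finset.mem_powersetCard_univ]
      refine ⟨by rw [Finset.card_insert_of_notMem hvT, h2], Finset.mem_insert_self _ _, ?_⟩
      rw [Finset.erase_insert hvT]
      exact hsub
    · intro S hS
      simp only [Finset.mem_coe, Finset.mem_filter] at hS
      exact Finset.insert_erase hS.2.1
    · intro T hT
      rw [Finset.mem_coe, Finset.mem_powersetCard] at hT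
      have hvT : v ∉ T := fun h => G.notMem_neighborFinset_self v (hT.1 h)
      exact Finset.erase_insert hvT
  rw [hb, Finset.card_powersetCard]
  rfl

private lemma sumClique {V : Type*} [Fintype V] [DecidableEq V] (G : SimpleGraph V)
    [DecidableRel G.Adj] :
    ∑ S ∈ (Finset.univ : Finset V).powersetCard 3,
      (if G.IsNClique 3 S then (1 : ℤ) else 0) = ((G.cliqueFinset 3).card : ℤ) := by
  rw [Finset.sum_boole]
  congr 2
  ext S
  simp only [Finset.mem_filter, Finset.mem_powersetCard_univ,
    SimpleGraph.mem_cliqueFinset_iff]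
  exact ⟨fun h => h.2, fun h => ⟨h.card_eq, h⟩⟩

private lemma final {V : Type*} [Fintype V] [DecidableEq V] (G : SimpleGraph V) [DecidableRel G.Adj] :
    ((∑ S ∈ (Finset.univ : Finset V).powersetCard 3,
      (Nat.card ((G.induce (S : Set V))ᶜ.ConnectedComponent) - 1) : ℕ) : ℤ) =
      ∑ v : V, ((G.degree v).choose 2 : ℤ) - (G.cliqueFinset 3).card := by
  rw [Nat.cast_sum]
  rw [Finset.sum_congr rfl fun S hS => key2 G S (Finset.mem_powersetCard_univ.mp hS)]
  rw [Finset.sum_sub_distrib, sumClique]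
  congr 1
  rw [← Nat.cast_sum, sumCenters, Nat.cast_sum]

/-- For every finite simple graph `G`,
`B_1(G) = Σ_{v ∈ V} C(deg v, 2) − k_3(G)`. -/
theorem linStrand_one_eq
    {V : Type*} [Fintype V] [DecidableEq V] (G : SimpleGraph V) [DecidableRel G.Adj] :
    (linStrand G 1 : ℤ) =
      ∑ v : V, ((G.degree v).choose 2 : ℤ) - (G.cliqueFinset 3).card := by
  unfold linStrand
  exact final G
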